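/- For every s₁ ∈ ℂ with 0 < |s₁| < 1, the set of w ∈ ℂ such that (s₁, 0, w) lies in the closure of A in ℂ³ is exactly {a − 2z₁ : a ∈ ℤ, z₁ ∈ ℍ, e^{2πiz₁} = s₁}; in particular, this fiber of the closure is a countable discrete subset of ℂ. -/

import Mathlib

open Complex Filter Topology

lemma abs_exp_two_pi (z : ℂ) :
    ‖Complex.exp (2*Real.pi*Complex.I*z)‖ = Real.exp (-(2*Real.pi*z.im)) := by
  rw [Complex.norm_exp]; congr 1
  simp [Complex.mul_re, Complex.mul_im]

lemma easy_dir (A : Set (ℂ × ℂ × ℂ))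
    (hA : A = {p | ∃ z₁ z₂ : ℂ, 0 < z₁.im ∧ 0 < z₂.im ∧ ∃ a b : ℤ,
      p = (Complex.exp (2 * Real.pi * Complex.I * z₁),
           Complex.exp (2 * Real.pi * Complex.I * z₂),
           (a : ℂ) - (b : ℂ) * (z₁ + z₂) + (z₂ - z₁))})
    (s₁ w z₁ : ℂ) (a : ℤ) (h1 : 0 < z₁.im)
    (h2 : Complex.exp (2 * Real.pi * Complex.I * z₁) = s₁)
    (hw : w = (a : ℂ) - 2 * z₁) :
    (s₁, (0:ℂ), w) ∈ closure A := by
  have key : ∀ n : ℕ, (s₁, Complex.exp (2*Real.pi*Complex.I*(z₁ + n*Complex.I)), w) ∈ A := by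
    intro n
    rw [hA]
    refine ⟨z₁, z₁ + n*Complex.I, h1, ?_, a, 1, ?_⟩
    · simp only [Complex.add_im, Complex.mul_im, Complex.natCast_re, Complex.I_im,
        Complex.natCast_im, Complex.I_re]
      positivity
    · rw [← h2, hw]
      norm_num
      ring
  refine mem_closure_of_tendsto (b := atTop) (f := fun n : ℕ =>
    (s₁, Complex.exp (2*Real.pi*Complex.I*(z₁ + n*Complex.I)), w)) ?_ (Filter.Eventually.of_forall key)
  refine Filter.Tendsto.prodMk_nhds tendsto_const_nhds
    (Filter.Tendsto.prodMk_nhds ?_ tendsto_const_nhds)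
  rw [tendsto_zero_iff_norm_tendsto_zero]
  have heq : ∀ n : ℕ, ‖Complex.exp (2*Real.pi*Complex.I*(z₁ + n*Complex.I))‖
      = Real.exp (-(2*Real.pi*(z₁.im + n))) := by
    intro n
    rw [abs_exp_two_pi]
    congr 2
    simp [Complex.add_im, Complex.mul_im]
  simp only [heq]
  apply Real.tendsto_exp_atBot.comp
  apply Filter.tendsto_neg_atBot_iff.mpr
  have : Tendsto (fun n : ℕ => (z₁.im + n)) atTop atTop :=
    tendsto_atTop_add_const_left _ _ tendsto_natCast_atTop_atTop
  exact this.const_mul_atTop Real.two_pi_pos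

lemma hard_dir (A : Set (ℂ × ℂ × ℂ))
    (hA : A = {p | ∃ z₁ z₂ : ℂ, 0 < z₁.im ∧ 0 < z₂.im ∧ ∃ a b : ℤ,
      p = (Complex.exp (2 * Real.pi * Complex.I * z₁),
           Complex.exp (2 * Real.pi * Complex.I * z₂),
           (a : ℂ) - (b : ℂ) * (z₁ + z₂) + (z₂ - z₁))})
    (s₁ : ℂ) (hs₁0 : s₁ ≠ 0) (hs₁1 : ‖s₁‖ < 1)
    (w : ℂ) (hw : (s₁, (0:ℂ), w) ∈ closure A) :
    ∃ a : ℤ, ∃ z₁ : ℂ, 0 < z₁.im ∧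
      Complex.exp (2 * Real.pi * Complex.I * z₁) = s₁ ∧ w = (a : ℂ) - 2 * z₁ := by
  obtain ⟨f, hfA, hf⟩ := mem_closure_iff_seq_limit.mp hw
  simp only [hA, Set.mem_setOf_eq] at hfA
  choose z₁ z₂ h1 h2 a b hp using hfA
  set t : ℕ → ℂ := fun n => (a n : ℂ) - (b n : ℂ) * (z₁ n + z₂ n) + (z₂ n - z₁ n) with ht
  -- component convergences
  have hc1 : Tendsto (fun n => Complex.exp (2*Real.pi*Complex.I*(z₁ n))) atTop (𝓝 s₁) := by
    have := (Continuous.tendsto (continuous_fst) ((s₁, (0:ℂ), w))).comp hf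
    exact this.congr fun n => by simp [Function.comp, hp n]
  have hc2 : Tendsto (fun n => Complex.exp (2*Real.pi*Complex.I*(z₂ n))) atTop (𝓝 (0:ℂ)) := by
    have := (Continuous.tendsto (continuous_fst.comp continuous_snd) ((s₁, (0:ℂ), w))).comp hf
    exact this.congr fun n => by simp [Function.comp, hp n]
  have hc3 : Tendsto t atTop (𝓝 w) := by
    have := (Continuous.tendsto (continuous_snd.comp continuous_snd) ((s₁, (0:ℂ), w))).comp hf
    exact this.congr fun n => by simp [Function.comp, hp n, ht]
  have hpi := Real.pi_pos
  have habs0 : 0 < ‖s₁‖ := by simpa [AbsoluteValue.pos_iff] using hs₁0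
  -- y₁ converges
  set y₀ : ℝ := -(Real.log ‖s₁‖)/(2*Real.pi) with hy₀
  have hy1 : Tendsto (fun n => (z₁ n).im) atTop (𝓝 y₀) := by
    have habs : Tendsto (fun n => ‖Complex.exp (2*Real.pi*Complex.I*(z₁ n))‖)
        atTop (𝓝 ‖s₁‖) := (continuous_norm.tendsto s₁).comp hc1
    have hlog : Tendsto (fun n => Real.log ‖Complex.exp (2*Real.pi*Complex.I*(z₁ n))‖)
        atTop (𝓝 (Real.log ‖s₁‖)) :=
      ((Real.continuousAt_log (ne_of_gt habs0)).tendsto).comp habs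
    have hlog' : Tendsto (fun n => -(2*Real.pi*(z₁ n).im)) atTop (𝓝 (Real.log ‖s₁‖)) := by
      refine hlog.congr fun n => ?_
      rw [abs_exp_two_pi, Real.log_exp]
    have := hlog'.const_mul (-(2*Real.pi))⁻¹
    refine this.congr' ?_ |>.mono_right ?_
    · filter_upwards with n; field_simp
    · apply le_of_eq; congr 1; rw [hy₀]; field_simp
  -- y₂ tends to infinity
  have hy2 : Tendsto (fun n => (z₂ n).im) atTop atTop := by
    have habs2 : Tendsto (fun n => Real.exp (-(2*Real.pi*(z₂ n).im))) atTop (𝓝 0) := by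
      have h' := (continuous_norm.tendsto 0).comp hc2
      rw [norm_zero] at h'
      exact h'.congr fun n => by simp [Function.comp, abs_exp_two_pi]
    refine tendsto_atTop.mpr fun M => ?_
    have := habs2.eventually (eventually_lt_nhds (Real.exp_pos (-(2*Real.pi*M))))
    filter_upwards [this] with n hn
    have := Real.exp_lt_exp.mp hn
    nlinarith
  -- eventual bounds
  have him : Tendsto (fun n => (t n).im) atTop (𝓝 w.im) := (Complex.continuous_im.tendsto w).comp hc3
  have htim : ∀ n, (t n).im = (1 - (b n : ℝ)) * (z₂ n).im - (1 + (b n : ℝ)) * (z₁ n).im := by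
    intro n
    simp [ht, Complex.add_im, Complex.sub_im, Complex.mul_im, Complex.mul_re]
    ring
  have hev1 : ∀ᶠ n in atTop, (z₁ n).im < y₀ + 1 :=
    hy1.eventually (eventually_lt_nhds (by linarith))
  have hev2 : ∀ᶠ n in atTop, |w.im| + y₀ + 2 < (z₂ n).im := hy2.eventually_gt_atTop _
  have hev3 : ∀ᶠ n in atTop, |(t n).im - w.im| < 1 := by
    have : Tendsto (fun n => (t n).im - w.im) atTop (𝓝 0) := by
      simpa using him.sub_const w.im
    simpa using (this.eventually (eventually_lt_nhds (one_pos))).and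
      (this.eventually (eventually_gt_nhds (by norm_num : (-1:ℝ) < 0))) |>.mono
      (fun n hn => abs_lt.mpr ⟨hn.2, hn.1⟩)
  have hevb : ∀ᶠ n in atTop, b n = 1 := by
    filter_upwards [hev1, hev2, hev3] with n e1 e2 e3
    have h1n : 0 < (z₁ n).im := h1 n
    have htn := htim n
    have ha1 := abs_lt.mp e3
    have hw1 : -(|w.im|) ≤ w.im := neg_abs_le w.im
    have hw2 : w.im ≤ |w.im| := le_abs_self w.im
    by_contra hb
    rcases lt_or_gt_of_ne hb with hlt | hgt
    · have hble : (b n : ℝ) ≤ 0 := by exact_mod_cast (by omega : b n ≤ 0)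
      nlinarith
    · have hbge : (2:ℝ) ≤ (b n : ℝ) := by exact_mod_cast hgt
      nlinarith
  -- product converges to s₁ * exp(π I w) and is eventually ±1
  have hgt : Tendsto (fun n => Complex.exp (2*Real.pi*Complex.I*(z₁ n)) *
      Complex.exp (Real.pi*Complex.I*(t n))) atTop (𝓝 (s₁ * Complex.exp (Real.pi*Complex.I*w))) := by
    refine hc1.mul (((Complex.continuous_exp.tendsto _)).comp ?_)
    exact hc3.const_mul (Real.pi*Complex.I) |>.congr fun n => by ring_nf
  have hev5 : ∀ᶠ n in atTop, Complex.exp (2*Real.pi*Complex.I*(z₁ n)) *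
      Complex.exp (Real.pi*Complex.I*(t n)) ∈ ({1, -1} : Set ℂ) := by
    filter_upwards [hevb] with n hb1
    have htn : t n = (a n : ℂ) - 2 * z₁ n := by rw [ht]; push_cast [hb1]; ring
    rw [← Complex.exp_add, htn,
      show 2*(Real.pi:ℂ)*Complex.I*(z₁ n) + Real.pi*Complex.I*((a n : ℂ) - 2*z₁ n)
        = (a n : ℤ) * (Real.pi*Complex.I) by push_cast; ring,
      Complex.exp_int_mul, Complex.exp_pi_mul_I]
    rcases Int.even_or_odd (a n) with he | ho
    · left; exact he.neg_one_zpow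
    · right; exact ho.neg_one_zpow
  have hclosed : IsClosed ({1, -1} : Set ℂ) :=
    Set.Finite.isClosed (by simp : ({1, -1} : Set ℂ).Finite)
  have hc : s₁ * Complex.exp (Real.pi*Complex.I*w) ∈ ({1, -1} : Set ℂ) :=
    hclosed.mem_of_tendsto hgt hev5
  -- Im w < 0
  have habspiw : ‖Complex.exp (Real.pi*Complex.I*w)‖ = Real.exp (-(Real.pi * w.im)) := by
    rw [Complex.norm_exp]; congr 1; simp [Complex.mul_re, Complex.mul_im]
  have habs1 : ‖s₁ * Complex.exp (Real.pi*Complex.I*w)‖ = 1 := by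
    rcases hc with h | h <;> rw [h] <;> simp
  rw [norm_mul, habspiw] at habs1
  have hwim : w.im < 0 := by
    by_contra hwim
    push_neg at hwim
    have : Real.exp (-(Real.pi * w.im)) ≤ 1 := Real.exp_le_one_iff.mpr (by nlinarith)
    nlinarith [Real.exp_pos (-(Real.pi * w.im))]
  have hexpne : Complex.exp (Real.pi*Complex.I*w) ≠ 0 := Complex.exp_ne_zero _
  rcases hc with h | h
  · -- s₁ * exp(πIw) = 1
    refine ⟨0, -w/2, ?_, ?_, by push_cast; ring⟩
    · have : (-w/2).im = -(w.im)/2 := by simp [Complex.div_im]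
      rw [this]; linarith
    · have hs : s₁ = Complex.exp (-(Real.pi*Complex.I*w)) := by
        rw [Complex.exp_neg]
        field_simp at h ⊢
        linear_combination h
      rw [hs]; congr 1; ring
  · -- s₁ * exp(πIw) = -1
    have h' : s₁ * Complex.exp (Real.pi*Complex.I*w) = -1 := by simpa using h
    refine ⟨1, (1-w)/2, ?_, ?_, by push_cast; ring⟩
    · have : ((1-w)/2).im = -(w.im)/2 := by simp [Complex.div_im]
      rw [this]; linarith
    · have hs : s₁ = -Complex.exp (-(Real.pi*Complex.I*w)) := by
        rw [Complex.exp_neg]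
        field_simp at h' ⊢
        linear_combination h'
      rw [hs, show 2*(Real.pi:ℂ)*Complex.I*((1-w)/2) = Real.pi*Complex.I + -(Real.pi*Complex.I*w) by ring,
        Complex.exp_add, Complex.exp_pi_mul_I]
      ring

lemma range_char (s₁ : ℂ) (hs₁0 : s₁ ≠ 0) (hs₁1 : ‖s₁‖ < 1) :
    ∃ z₀ : ℂ, 0 < z₀.im ∧ Complex.exp (2 * Real.pi * Complex.I * z₀) = s₁ ∧
      {w : ℂ | ∃ a : ℤ, ∃ z₁ : ℂ, 0 < z₁.im ∧
        Complex.exp (2 * Real.pi * Complex.I * z₁) = s₁ ∧ w = (a : ℂ) - 2 * z₁}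
      = Set.range (fun n : ℤ => (n : ℂ) - 2 * z₀) := by
  have hpi := Real.pi_pos
  have h2pine : (2*(Real.pi:ℂ)*Complex.I) ≠ 0 := by
    simp [Complex.ext_iff, Real.pi_ne_zero]
  set z₀ := Complex.log s₁ / (2*Real.pi*Complex.I) with hz₀
  have he : Complex.exp (2*Real.pi*Complex.I*z₀) = s₁ := by
    rw [hz₀, mul_div_cancel₀ _ h2pine, Complex.exp_log hs₁0]
  have him : 0 < z₀.im := by
    have habs := abs_exp_two_pi z₀
    rw [he] at habs
    have hlt : Real.exp (-(2*Real.pi*z₀.im)) < 1 := by rw [← habs]; exact hs₁1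
    have hneg := Real.exp_lt_one_iff.mp hlt
    nlinarith
  refine ⟨z₀, him, he, ?_⟩
  ext w
  simp only [Set.mem_setOf_eq, Set.mem_range]
  constructor
  · rintro ⟨a, z₁, hz₁im, hz₁e, rfl⟩
    have hee : Complex.exp (2*Real.pi*Complex.I*z₁) = Complex.exp (2*Real.pi*Complex.I*z₀) := by
      rw [hz₁e, he]
    obtain ⟨k, hk⟩ := Complex.exp_eq_exp_iff_exists_int.mp hee
    have hz₁ : z₁ = z₀ + k := by
      apply mul_left_cancel₀ h2pine
      rw [hk]; push_cast; ring
    exact ⟨a - 2*k, by rw [hz₁]; push_cast; ring⟩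
  · rintro ⟨n, rfl⟩
    exact ⟨n, z₀, him, he, rfl⟩


lemma range_discrete (c : ℂ) :
    DiscreteTopology (Set.range (fun n : ℤ => (n : ℂ) + c)) := by
  apply discreteTopology_iff_isOpen_singleton.mpr
  rintro ⟨x, hx⟩
  obtain ⟨n, rfl⟩ := hx
  have hset : ({⟨(n:ℂ) + c, ⟨n, rfl⟩⟩} : Set (Set.range (fun n : ℤ => (n : ℂ) + c)))
      = Subtype.val ⁻¹' Metric.ball ((n:ℂ) + c) 1 := by
    ext ⟨y, hy⟩
    obtain ⟨m, rfl⟩ := hy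
    simp only [Set.mem_singleton_iff, Set.mem_preimage, Metric.mem_ball, Subtype.mk.injEq]
    constructor
    · rintro h; replace h := Subtype.mk.inj h; rw [h]; simpa using one_pos
    · intro h
      have : dist ((m:ℂ) + c) ((n:ℂ) + c) = |(m - n : ℤ)| := by
        rw [Complex.dist_eq]
        push_cast
        rw [show (m:ℂ) + c - ((n:ℂ) + c) = ((m:ℂ) - n) by ring]
        rw [← Int.cast_sub, Complex.norm_intCast]
        push_cast; ring
      rw [this] at h
      have : |(m - n : ℤ)| < 1 := by exact_mod_cast h
      have : m = n := by
        have h0 := Int.abs_lt_one_iff.mp this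
        omega
      rw [this]
  rw [hset]
  exact IsOpen.preimage continuous_subtype_val Metric.isOpen_ball


/-- For `0 < |s₁| < 1`, the fiber of the closure of `A` over `(s₁, 0)`
is exactly `{a - 2z₁ : a ∈ ℤ, z₁ ∈ ℍ, e^{2πiz₁} = s₁}`, a countable and discrete subset
of `ℂ`. -/
theorem stmt15
    (A : Set (ℂ × ℂ × ℂ))
    (hA : A = {p | ∃ z₁ z₂ : ℂ, 0 < z₁.im ∧ 0 < z₂.im ∧ ∃ a b : ℤ,
      p = (Complex.exp (2 * Real.pi * Complex.I * z₁),
           Complex.exp (2 * Real.pi * Complex.I * z₂),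
           (a : ℂ) - (b : ℂ) * (z₁ + z₂) + (z₂ - z₁))})
    (s₁ : ℂ) (hs₁0 : s₁ ≠ 0) (hs₁1 : ‖s₁‖ < 1) :
    {w : ℂ | (s₁, (0 : ℂ), w) ∈ closure A} =
      {w : ℂ | ∃ a : ℤ, ∃ z₁ : ℂ, 0 < z₁.im ∧
        Complex.exp (2 * Real.pi * Complex.I * z₁) = s₁ ∧ w = (a : ℂ) - 2 * z₁} ∧
    Set.Countable {w : ℂ | (s₁, (0 : ℂ), w) ∈ closure A} ∧
    DiscreteTopology {w : ℂ | (s₁, (0 : ℂ), w) ∈ closure A} := by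
  have hEq : {w : ℂ | (s₁, (0 : ℂ), w) ∈ closure A} =
      {w : ℂ | ∃ a : ℤ, ∃ z₁ : ℂ, 0 < z₁.im ∧
        Complex.exp (2 * Real.pi * Complex.I * z₁) = s₁ ∧ w = (a : ℂ) - 2 * z₁} := by
    ext w
    constructor
    · exact hard_dir A hA s₁ hs₁0 hs₁1 w
    · rintro ⟨a, z₁, hz1, hz2, hz3⟩
      exact easy_dir A hA s₁ w z₁ a hz1 hz2 hz3
  obtain ⟨z₀, him, he, hR⟩ := range_char s₁ hs₁0 hs₁1
  have hR' : Set.range (fun n : ℤ => (n : ℂ) - 2 * z₀)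
      = Set.range (fun n : ℤ => (n : ℂ) + (-(2 * z₀))) := by
    ext x
    constructor <;> rintro ⟨n, rfl⟩ <;> exact ⟨n, by ring⟩
  refine ⟨hEq, ?_, ?_⟩
  · rw [hEq, hR]
    exact Set.countable_range _
  · rw [hEq, hR, hR']
    exact range_discrete _
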